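/- (Formula for v-adic multiple zeta values at negative integers in terms of ∞-adic ones.) Let r ≥ 1 and m_1,…,m_r ∈ ℤ_{≥0}. Then in A: ζ_v(−m_1,…,−m_r) = Σ_{l=0}^{r} (−1)^l · ζ_{<d}(−m_{l+1},…,−m_r) · [ Σ_{(a_1,…,a_l)} v^{a_1+⋯+a_l} · ζ_{<d}(−(m_1−a_1)) ⋯ ζ_{<d}(−(m_l−a_l)) · C(m_1,a_1) ⋯ C(m_l,a_l) · ζ_∞(−a_1,…,−a_l) ], where the inner sum runs over all integer tuples (a_1,…,a_l) with 0 ≤ a_j ≤ m_j and (q−1) | (m_j − a_j) for all 1 ≤ j ≤ l, and the l = 0 summand is ζ_{<d}(−m_1,…,−m_r). -/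

import Mathlib

open Polynomial

/-- The power sum `S_i(-m)`: the sum of `n ^ m` over monic polynomials `n` of degree `i`. -/
noncomputable def powerSum (F : Type*) [Field F] [Fintype F] (i m : ℕ) : Polynomial F :=
  ∑ᶠ n ∈ {n : Polynomial F | n.Monic ∧ n.natDegree = i}, n ^ m

/-- The restricted power sum `S̃_i(-m)`: the sum of `n ^ m` over monic polynomials `n` of
degree `i` not divisible by `v`. -/
noncomputable def powerSumV (F : Type*) [Field F] [Fintype F] (v : Polynomial F) (i m : ℕ) :
    Polynomial F :=
  ∑ᶠ n ∈ {n : Polynomial F | n.Monic ∧ n.natDegree = i ∧ ¬ v ∣ n}, n ^ m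

/-- `ζ_∞(-m_1, …, -m_r)`, the ∞-adic multiple zeta value at nonpositive integers:
the sum over `i_1 > ⋯ > i_r ≥ 0` of `S_{i_1}(-m_1) ⋯ S_{i_r}(-m_r)`.
Only `m 0, …, m (r-1)` are used.  The depth-0 value is `1`. -/
noncomputable def zetaInf (F : Type*) [Field F] [Fintype F] (r : ℕ) (m : ℕ → ℕ) :
    Polynomial F :=
  ∑ᶠ i ∈ {i : Fin r → ℕ | StrictAnti i}, ∏ j : Fin r, powerSum F (i j) (m (j : ℕ))

/-- `ζ⋆_∞(-m_1, …, -m_r)`, the ∞-adic multiple zeta star value at nonpositive integers: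
the sum over `i_1 ≥ ⋯ ≥ i_r ≥ 0` of `S_{i_1}(-m_1) ⋯ S_{i_r}(-m_r)`. -/
noncomputable def zetaInfStar (F : Type*) [Field F] [Fintype F] (r : ℕ) (m : ℕ → ℕ) :
    Polynomial F :=
  ∑ᶠ i ∈ {i : Fin r → ℕ | Antitone i}, ∏ j : Fin r, powerSum F (i j) (m (j : ℕ))

/-- `ζ_v(-m_1, …, -m_r)`, the v-adic multiple zeta value at nonpositive integers. -/
noncomputable def zetaV (F : Type*) [Field F] [Fintype F] (v : Polynomial F) (r : ℕ)
    (m : ℕ → ℕ) : Polynomial F :=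
  ∑ᶠ i ∈ {i : Fin r → ℕ | StrictAnti i}, ∏ j : Fin r, powerSumV F v (i j) (m (j : ℕ))

/-- `ζ⋆_v(-m_1, …, -m_r)`, the v-adic multiple zeta star value at nonpositive integers. -/
noncomputable def zetaVStar (F : Type*) [Field F] [Fintype F] (v : Polynomial F) (r : ℕ)
    (m : ℕ → ℕ) : Polynomial F :=
  ∑ᶠ i ∈ {i : Fin r → ℕ | Antitone i}, ∏ j : Fin r, powerSumV F v (i j) (m (j : ℕ))

/-- `ζ_{<d}(-m_1, …, -m_r)`, the truncated multiple zeta value: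
the sum over `d > i_1 > ⋯ > i_r ≥ 0` of `S_{i_1}(-m_1) ⋯ S_{i_r}(-m_r)`. -/
noncomputable def zetaLt (F : Type*) [Field F] [Fintype F] (d r : ℕ) (m : ℕ → ℕ) :
    Polynomial F :=
  ∑ᶠ i ∈ {i : Fin r → ℕ | StrictAnti i ∧ ∀ j, i j < d},
    ∏ j : Fin r, powerSum F (i j) (m (j : ℕ))

/-- `ζ⋆_{<d}(-m_1, …, -m_r)`, the truncated multiple zeta star value. -/
noncomputable def zetaLtStar (F : Type*) [Field F] [Fintype F] (d r : ℕ) (m : ℕ → ℕ) :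
    Polynomial F :=
  ∑ᶠ i ∈ {i : Fin r → ℕ | Antitone i ∧ ∀ j, i j < d},
    ∏ j : Fin r, powerSum F (i j) (m (j : ℕ))

/-- `ζ_{<d}(-m)`, the depth-one truncated zeta value `Σ_{d > i ≥ 0} S_i(-m)`. -/
noncomputable def zetaLtOne (F : Type*) [Field F] [Fintype F] (d m : ℕ) : Polynomial F :=
  ∑ᶠ i ∈ {i : ℕ | i < d}, powerSum F i m


open Polynomial Finset

namespace ZetaNegAux

variable (F : Type*) [Field F] [Fintype F]

theorem finsum_mem_eq_finset_sum {M α : Type*} [AddCommMonoid M] (f : α → M) (S : Set α)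
    (t : Finset α) (h1 : ∀ a ∈ S, f a ≠ 0 → a ∈ t) (h2 : ∀ a ∈ t, a ∈ S) :
    ∑ᶠ a ∈ S, f a = ∑ a ∈ t, f a := by
  have hfin : (S ∩ Function.support f).Finite :=
    Set.Finite.subset t.finite_toSet (fun a ha => h1 a ha.1 ha.2)
  rw [finsum_mem_eq_sum f hfin]
  apply Finset.sum_subset
  · intro a ha
    rw [Set.Finite.mem_toFinset] at ha
    exact h1 a ha.1 ha.2
  · intro a hat hna
    by_contra hne
    exact hna (hfin.mem_toFinset.2 ⟨h2 a hat, hne⟩)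

theorem finite_ltDeg (e : ℕ) : {p : F[X] | p.degree < (e : ℕ)}.Finite := by
  have h : {p : F[X] | p.degree < (e : ℕ)} = ↑(degreeLT F e) := by
    ext p; simp [Polynomial.mem_degreeLT]
  rw [h]
  have : Finite (degreeLT F e) := Finite.of_equiv _ (degreeLTEquiv F e).symm.toEquiv
  exact Set.toFinite _

theorem finite_mon (i : ℕ) : {n : F[X] | n.Monic ∧ n.natDegree = i}.Finite := by
  apply (finite_ltDeg F (i + 1)).subset
  rintro n ⟨hm, hd⟩
  simp only [Set.mem_setOf_eq, Polynomial.degree_eq_natDegree hm.ne_zero, hd]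
  exact_mod_cast lt_add_one i

noncomputable def monF (i : ℕ) : Finset F[X] := (finite_mon F i).toFinset

@[simp] theorem mem_monF {i : ℕ} {n : F[X]} : n ∈ monF F i ↔ n.Monic ∧ n.natDegree = i := by
  simp [monF]

noncomputable def ltF (e : ℕ) : Finset F[X] := (finite_ltDeg F e).toFinset

@[simp] theorem mem_ltF {e : ℕ} {p : F[X]} : p ∈ ltF F e ↔ p.degree < (e : ℕ) := by
  simp [ltF]

theorem powerSum_eq (i m : ℕ) : powerSum F i m = ∑ n ∈ monF F i, n ^ m := by
  rw [powerSum]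
  exact finsum_mem_eq_finset_sum _ _ _ (fun a ha _ => (mem_monF F).2 ha) (fun a ha => (mem_monF F).1 ha)

theorem finite_monV (v : F[X]) (i : ℕ) :
    {n : F[X] | n.Monic ∧ n.natDegree = i ∧ ¬ v ∣ n}.Finite :=
  (finite_mon F i).subset (fun n hn => ⟨hn.1, hn.2.1⟩)

noncomputable def monVF (v : F[X]) (i : ℕ) : Finset F[X] := (finite_monV F v i).toFinset

@[simp] theorem mem_monVF {v : F[X]} {i : ℕ} {n : F[X]} :
    n ∈ monVF F v i ↔ n.Monic ∧ n.natDegree = i ∧ ¬ v ∣ n := by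
  simp [monVF]

theorem powerSumV_eq (v : F[X]) (i m : ℕ) : powerSumV F v i m = ∑ n ∈ monVF F v i, n ^ m := by
  rw [powerSumV]
  exact finsum_mem_eq_finset_sum _ _ _ (fun a ha _ => (mem_monVF F).2 ha) (fun a ha => (mem_monVF F).1 ha)

theorem powerSumV_eq_powerSum {v : F[X]} (hd : 0 < v.natDegree) {i : ℕ} (hi : i < v.natDegree)
    (m : ℕ) : powerSumV F v i m = powerSum F i m := by
  rw [powerSumV_eq, powerSum_eq]
  apply Finset.sum_congr _ (fun _ _ => rfl)
  ext n
  simp only [mem_monVF, mem_monF]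
  constructor
  · rintro ⟨h1, h2, _⟩; exact ⟨h1, h2⟩
  · rintro ⟨h1, h2⟩
    refine ⟨h1, h2, fun hdvd => ?_⟩
    exact absurd (Polynomial.natDegree_le_of_dvd hdvd h1.ne_zero) (by omega)

end ZetaNegAux

namespace ZetaNegAux

variable (F : Type*) [Field F] [Fintype F]

theorem monic_divByMonic {n w : F[X]} (hn : n.Monic) (hw : w.Monic)
    (hdeg : w.natDegree ≤ n.natDegree) : (n /ₘ w).Monic := by
  unfold Polynomial.Monic
  rw [Polynomial.leadingCoeff_divByMonic_of_monic hw, hn.leadingCoeff]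
  rw [Polynomial.degree_eq_natDegree hw.ne_zero, Polynomial.degree_eq_natDegree hn.ne_zero]
  exact_mod_cast hdeg

theorem sum_monF_decomp {M : Type*} [AddCommMonoid M] (w : F[X]) (hw : w.Monic)
    (i : ℕ) (f : F[X] → M) :
    ∑ n ∈ monF F (i + w.natDegree), f n
      = ∑ g ∈ monF F i, ∑ h ∈ ltF F w.natDegree, f (w * g + h) := by
  rw [← Finset.sum_product']
  apply Finset.sum_nbij' (fun n => (n /ₘ w, n %ₘ w)) (fun p => w * p.1 + p.2)
  · intro n hn
    rw [mem_monF] at hn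
    obtain ⟨hm, hd⟩ := hn
    rw [Finset.mem_product, mem_monF, mem_ltF]
    refine ⟨⟨monic_divByMonic F hm hw (by omega), ?_⟩, ?_⟩
    · rw [Polynomial.natDegree_divByMonic _ hw, hd]; omega
    · have := Polynomial.degree_modByMonic_lt n hw
      rwa [Polynomial.degree_eq_natDegree hw.ne_zero] at this
  · intro p hp
    rw [Finset.mem_product, mem_monF, mem_ltF] at hp
    obtain ⟨⟨hm, hd⟩, hlt⟩ := hp
    have hwm : (w * p.1).Monic := hw.mul hm
    have hdeg : (w * p.1).natDegree = i + w.natDegree := by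
      rw [hw.natDegree_mul hm, hd]; omega
    have hlt' : p.2.degree < (w * p.1).degree := by
      rw [Polynomial.degree_eq_natDegree hwm.ne_zero, hdeg]
      exact hlt.trans_le (by exact_mod_cast le_add_self)
    rw [mem_monF]
    refine ⟨hwm.add_of_left hlt', ?_⟩
    have := Polynomial.degree_add_eq_left_of_degree_lt hlt'
    rw [Polynomial.natDegree, this, ← Polynomial.natDegree]
    exact hdeg
  · intro n hn
    simp only
    rw [add_comm, Polynomial.modByMonic_add_div n w]
  · intro p hp
    rw [Finset.mem_product, mem_monF, mem_ltF] at hp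
    obtain ⟨⟨hm, hd⟩, hlt⟩ := hp
    have h2 : p.2.degree < w.degree := by
      rwa [Polynomial.degree_eq_natDegree hw.ne_zero]
    obtain ⟨h3, h4⟩ := Polynomial.div_modByMonic_unique p.1 p.2 hw ⟨add_comm _ _, h2⟩
    rw [h3, h4]
  · intro n hn
    rw [add_comm, Polynomial.modByMonic_add_div n w]

end ZetaNegAux

namespace ZetaNegAux

variable (F : Type*) [Field F] [Fintype F]

theorem sum_pow_erase_zero [DecidableEq F] (k : ℕ) :
    ∑ c ∈ Finset.univ.erase (0 : F), c ^ k
      = if (Fintype.card F - 1) ∣ k then (-1 : F) else 0 := by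
  rw [← FiniteField.sum_pow_units F k]
  refine Finset.sum_bij' (i := fun c hc => Units.mk0 c (Finset.mem_erase.1 hc).1)
    (j := fun (u : Fˣ) _ => (u : F)) ?_ ?_ ?_ ?_ ?_
  · intro a ha; exact Finset.mem_univ _
  · intro u _
    exact Finset.mem_erase.2 ⟨u.ne_zero, Finset.mem_univ _⟩
  · intro a ha; rfl
  · intro u _; exact Units.ext rfl
  · intro a ha
    rw [← Units.val_pow_eq_pow_val]
    rfl

theorem sum_pow_univ (k : ℕ) :
    ∑ c : F, c ^ k = if k ≠ 0 ∧ (Fintype.card F - 1) ∣ k then (-1 : F) else 0 := by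
  classical
  rcases Nat.eq_zero_or_pos k with rfl | hk
  · simp [FiniteField.cast_card_eq_zero]
  · have h0 : (0 : F) ^ k = 0 := zero_pow hk.ne'
    rw [← Finset.sum_erase (f := fun c : F => c ^ k) Finset.univ h0, sum_pow_erase_zero]
    simp [hk.ne']

end ZetaNegAux

namespace ZetaNegAux

variable (F : Type*) [Field F] [Fintype F]

theorem zetaLtOne_eq (d m : ℕ) : zetaLtOne F d m = ∑ i ∈ Finset.range d, powerSum F i m := by
  rw [zetaLtOne]
  exact finsum_mem_eq_finset_sum _ _ _ (fun a ha _ => Finset.mem_range.2 ha)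
    (fun a ha => Finset.mem_range.1 ha)

theorem eq_C_coeff_of_mem_ltF1 {a : F[X]} (ha : a ∈ ltF F 1) :
    Polynomial.C (a.coeff 0) = a := by
  rw [mem_ltF] at ha
  by_cases h0 : a = 0
  · simp [h0]
  · have h1 : a.natDegree < 1 := (Polynomial.natDegree_lt_iff_degree_lt h0).2 ha
    exact (Polynomial.eq_C_of_natDegree_le_zero (by omega)).symm

theorem C_lc_mul_C_lc_inv_mul {a : F[X]} (h0 : a ≠ 0) :
    Polynomial.C a.leadingCoeff * (Polynomial.C a.leadingCoeff⁻¹ * a) = a := by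
  have hlc : a.leadingCoeff ≠ 0 := Polynomial.leadingCoeff_ne_zero.2 h0
  rw [← mul_assoc, ← Polynomial.C_mul, mul_inv_cancel₀ hlc, Polynomial.C_1, one_mul]

theorem sum_ltF_one_pow (k : ℕ) :
    ∑ h ∈ ltF F 1, h ^ k
      = if k ≠ 0 ∧ (Fintype.card F - 1) ∣ k then (-1 : F[X]) else 0 := by
  have : ∑ h ∈ ltF F 1, h ^ k = ∑ c : F, (Polynomial.C c) ^ k := by
    refine Finset.sum_nbij' (fun h => h.coeff 0) (fun c => Polynomial.C c) ?_ ?_ ?_ ?_ ?_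
    · intro a _; exact Finset.mem_univ _
    · intro c _
      rw [mem_ltF]
      exact Polynomial.degree_C_le.trans_lt (by norm_num)
    · intro a ha
      exact eq_C_coeff_of_mem_ltF1 F ha
    · intro c _; simp
    · intro a ha
      rw [eq_C_coeff_of_mem_ltF1 F ha]
  rw [this]
  simp_rw [← Polynomial.C_pow, ← map_sum, sum_pow_univ]
  split_ifs <;> simp

theorem sum_ltF_ne_zero_pow [DecidableEq F[X]] (e : ℕ) (k : ℕ) :
    ∑ h ∈ (ltF F e).filter (· ≠ 0), h ^ k
      = (if (Fintype.card F - 1) ∣ k then (-1 : F[X]) else 0) * zetaLtOne F e k := by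
  classical
  have hdisj : ∀ i ∈ Finset.range e, ∀ j ∈ Finset.range e, i ≠ j →
      Disjoint (monF F i) (monF F j) := by
    intro i _ j _ hij
    rw [Finset.disjoint_left]
    intro n hni hnj
    rw [mem_monF] at hni hnj
    exact hij (hni.2 ▸ hnj.2)
  have key : ∑ h ∈ (ltF F e).filter (· ≠ 0), h ^ k
      = ∑ p ∈ (Finset.univ.erase (0 : F)) ×ˢ ((Finset.range e).biUnion (fun i => monF F i)),
          (Polynomial.C p.1 * p.2) ^ k := by
    refine Finset.sum_nbij'
      (fun h => (h.leadingCoeff, Polynomial.C h.leadingCoeff⁻¹ * h))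
      (fun p => Polynomial.C p.1 * p.2) ?_ ?_ ?_ ?_ ?_
    · intro a ha
      rw [Finset.mem_filter, mem_ltF] at ha
      obtain ⟨hlt, h0⟩ := ha
      have hlc : a.leadingCoeff ≠ 0 := Polynomial.leadingCoeff_ne_zero.2 h0
      rw [Finset.mem_product, Finset.mem_erase, Finset.mem_biUnion]
      refine ⟨⟨hlc, Finset.mem_univ _⟩, a.natDegree, ?_, ?_⟩
      · exact Finset.mem_range.2 ((Polynomial.natDegree_lt_iff_degree_lt h0).2 (by exact_mod_cast hlt))
      · rw [mem_monF]
        constructor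
        · unfold Polynomial.Monic
          rw [Polynomial.leadingCoeff_mul, Polynomial.leadingCoeff_C]
          exact inv_mul_cancel₀ hlc
        · rw [Polynomial.natDegree_C_mul (inv_ne_zero hlc)]
    · intro p hp
      rw [Finset.mem_product, Finset.mem_erase, Finset.mem_biUnion] at hp
      obtain ⟨⟨hc0, _⟩, i, hi, hn⟩ := hp
      rw [mem_monF] at hn
      rw [Finset.mem_filter, mem_ltF]
      constructor
      · rw [Polynomial.degree_mul, Polynomial.degree_C hc0,
          Polynomial.degree_eq_natDegree hn.1.ne_zero, hn.2, zero_add]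
        exact_mod_cast Finset.mem_range.1 hi
      · exact mul_ne_zero (Polynomial.C_ne_zero.2 hc0) hn.1.ne_zero
    · intro a ha
      rw [Finset.mem_filter] at ha
      exact C_lc_mul_C_lc_inv_mul F ha.2
    · intro p hp
      rw [Finset.mem_product, Finset.mem_erase, Finset.mem_biUnion] at hp
      obtain ⟨⟨hc0, _⟩, i, hi, hn⟩ := hp
      rw [mem_monF] at hn
      have : (Polynomial.C p.1 * p.2).leadingCoeff = p.1 := by
        rw [Polynomial.leadingCoeff_mul, Polynomial.leadingCoeff_C, hn.1.leadingCoeff, mul_one]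
      ext
      · exact this
      · simp only [this]
        rw [← mul_assoc, ← Polynomial.C_mul, inv_mul_cancel₀ hc0, Polynomial.C_1, one_mul]
    · intro a ha
      rw [Finset.mem_filter] at ha
      simp only
      rw [C_lc_mul_C_lc_inv_mul F ha.2]
  rw [key, Finset.sum_product]
  have : ∀ c : F, ∀ n : F[X], (Polynomial.C c * n) ^ k = Polynomial.C c ^ k * n ^ k :=
    fun c n => mul_pow _ _ _
  simp_rw [this, ← Finset.mul_sum, ← Finset.sum_mul]
  rw [Finset.sum_biUnion hdisj]
  have : ∑ i ∈ Finset.range e, ∑ n ∈ monF F i, n ^ k = zetaLtOne F e k := by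
    rw [zetaLtOne_eq]
    exact Finset.sum_congr rfl (fun i _ => (powerSum_eq F i k).symm)
  rw [this]
  congr 1
  simp_rw [← Polynomial.C_pow, ← map_sum, sum_pow_erase_zero]
  split_ifs <;> simp

end ZetaNegAux

namespace ZetaNegAux

variable (F : Type*) [Field F] [Fintype F]

theorem powerSum_succ (i m : ℕ) :
    powerSum F (i + 1) m = ∑ a ∈ Finset.range (m + 1),
      Polynomial.X ^ a * powerSum F i a
        * (if (m - a) ≠ 0 ∧ (Fintype.card F - 1) ∣ (m - a) then (-1 : F[X]) else 0)
        * (m.choose a : F[X]) := by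
  rw [powerSum_eq F (i + 1) m]
  have hdec := sum_monF_decomp F Polynomial.X Polynomial.monic_X i (fun n => n ^ m)
  rw [Polynomial.natDegree_X] at hdec
  rw [hdec]
  calc ∑ g ∈ monF F i, ∑ h ∈ ltF F 1, (Polynomial.X * g + h) ^ m
      = ∑ g ∈ monF F i, ∑ a ∈ Finset.range (m + 1), ∑ h ∈ ltF F 1,
          h ^ (m - a) * (Polynomial.X ^ a * g ^ a * (m.choose a : F[X])) := by
        refine Finset.sum_congr rfl fun g _ => ?_
        rw [← Finset.sum_comm]
        refine Finset.sum_congr rfl fun h _ => ?_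
        rw [add_pow]
        refine Finset.sum_congr rfl fun a _ => ?_
        rw [mul_pow]; ring
    _ = ∑ a ∈ Finset.range (m + 1), ∑ g ∈ monF F i,
          (∑ h ∈ ltF F 1, h ^ (m - a)) * (Polynomial.X ^ a * g ^ a * (m.choose a : F[X])) := by
        rw [Finset.sum_comm]
        exact Finset.sum_congr rfl fun a _ => Finset.sum_congr rfl fun g _ =>
          (Finset.sum_mul _ _ _).symm
    _ = _ := by
        refine Finset.sum_congr rfl fun a _ => ?_
        rw [sum_ltF_one_pow, ← Finset.mul_sum]
        have : ∑ g ∈ monF F i, Polynomial.X ^ a * g ^ a * (m.choose a : F[X])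
            = Polynomial.X ^ a * (∑ g ∈ monF F i, g ^ a) * (m.choose a : F[X]) := by
          rw [← Finset.sum_mul, ← Finset.mul_sum]
        rw [this, ← powerSum_eq]
        ring

theorem powerSum_eq_zero {i m : ℕ} (h : m < i) : powerSum F i m = 0 := by
  induction i generalizing m with
  | zero => omega
  | succ i ih =>
    rw [powerSum_succ]
    refine Finset.sum_eq_zero fun a ha => ?_
    rw [Finset.mem_range] at ha
    rcases eq_or_lt_of_le (Nat.lt_succ_iff.1 ha) with rfl | hlt
    · simp
    · rw [ih (by omega)]
      ring

theorem powerSum_zero_exp (m : ℕ) : powerSum F 0 m = 1 := by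
  rw [powerSum_eq]
  have : monF F 0 = {1} := by
    ext n
    rw [mem_monF, Finset.mem_singleton]
    constructor
    · rintro ⟨hm, hd⟩
      exact hm.natDegree_eq_zero.1 hd
    · rintro rfl
      exact ⟨Polynomial.monic_one, Polynomial.natDegree_one⟩
  rw [this, Finset.sum_singleton, one_pow]

theorem powerSumV_add {v : F[X]} (hv : v.Monic) (hd : 0 < v.natDegree) (i m : ℕ) :
    powerSumV F v (i + v.natDegree) m
      = - ∑ a ∈ (Finset.range (m + 1)).filter (fun a => (Fintype.card F - 1) ∣ (m - a)),
          v ^ a * (zetaLtOne F v.natDegree (m - a) * (m.choose a : F[X])) * powerSum F i a := by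
  classical
  have hmem : monVF F v (i + v.natDegree)
      = (monF F (i + v.natDegree)).filter (fun n => ¬ v ∣ n) := by
    ext n
    rw [mem_monVF, Finset.mem_filter, mem_monF, and_assoc]
  have hstep : powerSumV F v (i + v.natDegree) m
      = ∑ n ∈ monF F (i + v.natDegree), (if v ∣ n then (0 : F[X]) else n ^ m) := by
    rw [powerSumV_eq, hmem, Finset.sum_filter]
    exact Finset.sum_congr rfl fun n _ => ite_not _ _ _
  rw [hstep, sum_monF_decomp F v hv i (fun n => if v ∣ n then (0 : F[X]) else n ^ m)]
  have hif : ∀ g ∈ monF F i, ∀ h ∈ ltF F v.natDegree,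
      (if v ∣ v * g + h then (0 : F[X]) else (v * g + h) ^ m)
        = (if h ≠ 0 then (v * g + h) ^ m else 0) := by
    intro g _ h hh
    rw [mem_ltF] at hh
    have h1 : v ∣ v * g + h ↔ v ∣ h := dvd_add_right (Dvd.intro g rfl)
    have h2 : v ∣ h ↔ h = 0 := by
      constructor
      · intro hdvd
        refine Polynomial.eq_zero_of_dvd_of_degree_lt hdvd ?_
        rwa [Polynomial.degree_eq_natDegree hv.ne_zero]
      · rintro rfl; exact dvd_zero v
    rw [h1, h2, ite_not]
    convert rfl
  calc ∑ g ∈ monF F i, ∑ h ∈ ltF F v.natDegree,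
        (if v ∣ v * g + h then (0 : F[X]) else (v * g + h) ^ m)
      = ∑ g ∈ monF F i, ∑ h ∈ (ltF F v.natDegree).filter (· ≠ 0), (v * g + h) ^ m := by
        refine Finset.sum_congr rfl fun g hg => ?_
        rw [Finset.sum_filter]
        exact Finset.sum_congr rfl fun h hh => hif g hg h hh
    _ = ∑ g ∈ monF F i, ∑ a ∈ Finset.range (m + 1),
          ∑ h ∈ (ltF F v.natDegree).filter (· ≠ 0),
            h ^ (m - a) * (v ^ a * g ^ a * (m.choose a : F[X])) := by
        refine Finset.sum_congr rfl fun g _ => ?_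
        rw [← Finset.sum_comm]
        refine Finset.sum_congr rfl fun h _ => ?_
        rw [add_pow]
        refine Finset.sum_congr rfl fun a _ => ?_
        rw [mul_pow]; ring
    _ = ∑ a ∈ Finset.range (m + 1), ∑ g ∈ monF F i,
          ((if (Fintype.card F - 1) ∣ (m - a) then (-1 : F[X]) else 0)
            * zetaLtOne F v.natDegree (m - a)) * (v ^ a * g ^ a * (m.choose a : F[X])) := by
        rw [Finset.sum_comm]
        refine Finset.sum_congr rfl fun a _ => Finset.sum_congr rfl fun g _ => ?_
        rw [← Finset.sum_mul, sum_ltF_ne_zero_pow]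
    _ = ∑ a ∈ Finset.range (m + 1),
          -(if (Fintype.card F - 1) ∣ (m - a) then
              v ^ a * (zetaLtOne F v.natDegree (m - a) * (m.choose a : F[X]))
                * powerSum F i a
            else 0) := by
        refine Finset.sum_congr rfl fun a _ => ?_
        rw [← Finset.mul_sum]
        have : ∑ g ∈ monF F i, v ^ a * g ^ a * (m.choose a : F[X])
            = v ^ a * (∑ g ∈ monF F i, g ^ a) * (m.choose a : F[X]) := by
          rw [← Finset.sum_mul, ← Finset.mul_sum]
        rw [this, ← powerSum_eq]
        split_ifs with hdvd
        · ring
        · simp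
    _ = _ := by
        rw [Finset.sum_neg_distrib, Finset.sum_filter]

end ZetaNegAux

namespace ZetaNegAux

variable (F : Type*) [Field F] [Fintype F]

theorem powerSumV_eq_zero {v : F[X]} (hv : v.Monic) (hd : 0 < v.natDegree) {i m : ℕ}
    (h : m + v.natDegree < i) : powerSumV F v i m = 0 := by
  have hi : i = (i - v.natDegree) + v.natDegree := by omega
  rw [hi, powerSumV_add F hv hd, neg_eq_zero]
  refine Finset.sum_eq_zero fun a ha => ?_
  rw [Finset.mem_filter, Finset.mem_range] at ha
  rw [powerSum_eq_zero F (show a < i - v.natDegree by omega)]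
  ring

def SAF (r B : ℕ) : Finset (Fin r → ℕ) :=
  (Fintype.piFinset fun _ => Finset.range B).filter (fun i => StrictAnti i)

theorem mem_SAF {r B : ℕ} {x : Fin r → ℕ} :
    x ∈ SAF r B ↔ (∀ j, x j < B) ∧ StrictAnti x := by
  rw [SAF, Finset.mem_filter, Fintype.mem_piFinset]
  simp only [Finset.mem_range]

theorem zetaInf_eq_fin (l : ℕ) (a : ℕ → ℕ) (B : ℕ) (hB : ∀ j : Fin l, a (j : ℕ) < B) :
    zetaInf F l a = ∑ x ∈ SAF l B, ∏ j : Fin l, powerSum F (x j) (a (j : ℕ)) := by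
  rw [zetaInf]
  apply finsum_mem_eq_finset_sum
  · intro x hx hne
    rw [mem_SAF]
    refine ⟨fun j => ?_, hx⟩
    by_contra hge
    push_neg at hge
    exact hne (Finset.prod_eq_zero (Finset.mem_univ j)
      (powerSum_eq_zero F (lt_of_lt_of_le (hB j) hge)))
  · intro x hx; exact (mem_SAF.1 hx).2

theorem zetaLt_eq_fin (d k : ℕ) (m' : ℕ → ℕ) :
    zetaLt F d k m' = ∑ x ∈ SAF k d, ∏ j : Fin k, powerSum F (x j) (m' (j : ℕ)) := by
  rw [zetaLt]
  apply finsum_mem_eq_finset_sum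
  · rintro x ⟨hsa, hlt⟩ _; exact mem_SAF.2 ⟨hlt, hsa⟩
  · intro x hx; rw [mem_SAF] at hx; exact ⟨hx.2, hx.1⟩

theorem zetaV_eq_fin {v : F[X]} (hv : v.Monic) (hd : 0 < v.natDegree) (r : ℕ) (m : ℕ → ℕ)
    (B : ℕ) (hB : ∀ j : Fin r, m (j : ℕ) + v.natDegree < B) :
    zetaV F v r m = ∑ x ∈ SAF r B, ∏ j : Fin r, powerSumV F v (x j) (m (j : ℕ)) := by
  rw [zetaV]
  apply finsum_mem_eq_finset_sum
  · intro x hx hne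
    rw [mem_SAF]
    refine ⟨fun j => ?_, hx⟩
    by_contra hge
    push_neg at hge
    exact hne (Finset.prod_eq_zero (Finset.mem_univ j)
      (powerSumV_eq_zero F hv hd (lt_of_lt_of_le (hB j) hge)))
  · intro x hx; exact (mem_SAF.1 hx).2

theorem card_filter_val_lt (r l : ℕ) (hl : l ≤ r) [DecidablePred fun j : Fin r => (j : ℕ) < l] :
    (Finset.univ.filter (fun j : Fin r => (j : ℕ) < l)).card = l := by
  have he : Finset.univ.filter (fun j : Fin r => (j : ℕ) < l)
      = (Finset.range l).attachFin (fun m hm => lt_of_lt_of_le (Finset.mem_range.1 hm) hl) := by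
    ext j
    simp [Finset.mem_attachFin]
  rw [he, Finset.card_attachFin, Finset.card_range]

theorem lowerset_iff {r d : ℕ} {x : Fin r → ℕ} (hsa : StrictAnti x) (j : Fin r)
    [DecidablePred fun k : Fin r => d ≤ x k] :
    ((j : ℕ) < (Finset.univ.filter (fun k : Fin r => d ≤ x k)).card ↔ d ≤ x j) := by
  classical
  set S := Finset.univ.filter (fun k : Fin r => d ≤ x k) with hS
  have hlow : ∀ {a b : Fin r}, a ≤ b → b ∈ S → a ∈ S := by
    intro a b hab hb
    rw [hS, Finset.mem_filter] at hb ⊢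
    refine ⟨Finset.mem_univ _, ?_⟩
    rcases eq_or_lt_of_le hab with rfl | hlt
    · exact hb.2
    · exact hb.2.trans (hsa hlt).le
  constructor
  · intro hj
    by_contra hnd
    have hsub : S ⊆ Finset.univ.filter (fun k : Fin r => (k : ℕ) < (j : ℕ)) := by
      intro k hk
      rw [Finset.mem_filter]
      refine ⟨Finset.mem_univ _, ?_⟩
      by_contra hge
      push_neg at hge
      have hjk : j ≤ k := by rwa [Fin.le_def]
      exact hnd (Finset.mem_filter.1 (hlow hjk hk)).2
    have h1 := Finset.card_le_card hsub
    rw [card_filter_val_lt r (j : ℕ) j.isLt.le] at h1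
    omega
  · intro hdle
    have hsub : (Finset.univ.filter (fun k : Fin r => (k : ℕ) < (j : ℕ) + 1)) ⊆ S := by
      intro k hk
      rw [Finset.mem_filter] at hk
      have hkj : k ≤ j := by rw [Fin.le_def]; omega
      exact hlow hkj (Finset.mem_filter.2 ⟨Finset.mem_univ _, hdle⟩)
    have h1 := Finset.card_le_card hsub
    rw [card_filter_val_lt r ((j : ℕ) + 1) j.isLt] at h1
    omega

end ZetaNegAux

namespace ZetaNegAux

def glue (r l d : ℕ) (x : Fin l → ℕ) (y : Fin (r - l) → ℕ) : Fin r → ℕ :=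
  fun j => if h : (j : ℕ) < l then d + x ⟨(j : ℕ), h⟩
    else y ⟨(j : ℕ) - l, by have := j.isLt; omega⟩

def extFun (l : ℕ) (p : Fin l → ℕ) : ℕ → ℕ := fun j => if h : j < l then p ⟨j, h⟩ else 0

theorem sum_fiber_eq {A : Type*} [AddCommMonoid A] (d M : ℕ) {r l : ℕ}
    (hl : l ≤ r) (φ : (Fin r → ℕ) → A) :
    ∑ x ∈ (SAF r (M + d + 1)).filter
        (fun x => (Finset.univ.filter fun j => d ≤ x j).card = l), φ x
      = ∑ p ∈ SAF l (M + 1) ×ˢ SAF (r - l) d, φ (glue r l d p.1 p.2) := by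
  have key : ∀ x ∈ (SAF r (M + d + 1)).filter
        (fun x => (Finset.univ.filter fun j => d ≤ x j).card = l),
      glue r l d (fun j : Fin l => x ⟨(j : ℕ), lt_of_lt_of_le j.isLt hl⟩ - d)
        (fun j : Fin (r - l) => x ⟨l + (j : ℕ), by have := j.isLt; omega⟩) = x := by
    intro x hx
    rw [Finset.mem_filter, mem_SAF] at hx
    obtain ⟨⟨hbd, hsa⟩, hcnt⟩ := hx
    have hiff : ∀ j : Fin r, ((j : ℕ) < l ↔ d ≤ x j) := fun j => hcnt ▸ lowerset_iff hsa j
    funext j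
    show glue r l d _ _ j = x j
    unfold glue
    split_ifs with h
    · have h2 := (hiff j).1 h
      show d + (x j - d) = x j
      omega
    · have heq : (⟨l + ((j : ℕ) - l), by have := j.isLt; omega⟩ : Fin r) = j :=
        Fin.ext (by show l + ((j : ℕ) - l) = (j : ℕ); omega)
      exact congrArg x heq
  refine Finset.sum_nbij'
    (fun x => (fun j : Fin l => x ⟨(j : ℕ), lt_of_lt_of_le j.isLt hl⟩ - d,
               fun j : Fin (r - l) => x ⟨l + (j : ℕ), by have := j.isLt; omega⟩))
    (fun p => glue r l d p.1 p.2) ?_ ?_ ?_ ?_ ?_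
  · intro x hx
    rw [Finset.mem_filter, mem_SAF] at hx
    obtain ⟨⟨hbd, hsa⟩, hcnt⟩ := hx
    have hiff : ∀ j : Fin r, ((j : ℕ) < l ↔ d ≤ x j) := fun j => hcnt ▸ lowerset_iff hsa j
    rw [Finset.mem_product, mem_SAF, mem_SAF]
    refine ⟨⟨fun j => ?_, fun a b hab => ?_⟩, fun j => ?_, fun a b hab => ?_⟩
    · show x ⟨(j : ℕ), lt_of_lt_of_le j.isLt hl⟩ - d < M + 1
      have h1 := hbd ⟨(j : ℕ), lt_of_lt_of_le j.isLt hl⟩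
      omega
    · show x ⟨(b : ℕ), lt_of_lt_of_le b.isLt hl⟩ - d < x ⟨(a : ℕ), lt_of_lt_of_le a.isLt hl⟩ - d
      have hab' : (a : ℕ) < (b : ℕ) := hab
      have h2 := hsa (show (⟨(a : ℕ), lt_of_lt_of_le a.isLt hl⟩ : Fin r)
          < ⟨(b : ℕ), lt_of_lt_of_le b.isLt hl⟩ from Fin.mk_lt_mk.2 hab')
      have h3 : d ≤ x ⟨(a : ℕ), lt_of_lt_of_le a.isLt hl⟩ :=
        (hiff ⟨(a : ℕ), lt_of_lt_of_le a.isLt hl⟩).1 a.isLt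
      have h4 : d ≤ x ⟨(b : ℕ), lt_of_lt_of_le b.isLt hl⟩ :=
        (hiff ⟨(b : ℕ), lt_of_lt_of_le b.isLt hl⟩).1 b.isLt
      omega
    · show x ⟨l + (j : ℕ), by have := j.isLt; omega⟩ < d
      by_contra hge
      push_neg at hge
      have h3 := (hiff _).2 hge
      have h4 : l + (j : ℕ) < l := h3
      omega
    · show x ⟨l + (b : ℕ), by have := b.isLt; omega⟩ < x ⟨l + (a : ℕ), by have := a.isLt; omega⟩
      have hab' : (a : ℕ) < (b : ℕ) := hab
      exact hsa (Fin.mk_lt_mk.2 (by omega))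
  · intro p hp
    rw [Finset.mem_product, mem_SAF, mem_SAF] at hp
    obtain ⟨⟨hbd1, hsa1⟩, hbd2, hsa2⟩ := hp
    rw [Finset.mem_filter, mem_SAF]
    have hsa : StrictAnti (glue r l d p.1 p.2) := by
      intro a b hab
      have hab' : (a : ℕ) < (b : ℕ) := hab
      show glue r l d p.1 p.2 b < glue r l d p.1 p.2 a
      unfold glue
      split_ifs with h1 h2 h2
      · have := hsa1 (show (⟨(a : ℕ), h2⟩ : Fin l) < ⟨(b : ℕ), h1⟩ from Fin.mk_lt_mk.2 hab')
        omega
      · omega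
      · exact lt_of_lt_of_le (hbd2 _) (Nat.le_add_right d _)
      · exact hsa2 (Fin.mk_lt_mk.2 (by omega))
    refine ⟨⟨fun j => ?_, hsa⟩, ?_⟩
    · show glue r l d p.1 p.2 j < M + d + 1
      unfold glue
      split_ifs with h
      · have := hbd1 ⟨(j : ℕ), h⟩; omega
      · exact lt_of_lt_of_le (hbd2 _) (by omega)
    · have hfe : (Finset.univ.filter fun j : Fin r => d ≤ glue r l d p.1 p.2 j)
          = Finset.univ.filter fun j : Fin r => (j : ℕ) < l := by
        apply Finset.filter_congr
        intro j _
        constructor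
        · intro hle
          by_contra hge
          have : glue r l d p.1 p.2 j < d := by
            unfold glue
            rw [dif_neg hge]
            exact hbd2 _
          omega
        · intro hlt
          show d ≤ glue r l d p.1 p.2 j
          unfold glue
          rw [dif_pos hlt]
          omega
      rw [hfe, card_filter_val_lt r l hl]
  · intro x hx
    exact key x hx
  · intro p hp
    apply Prod.ext
    · funext j
      show glue r l d p.1 p.2 ⟨(j : ℕ), lt_of_lt_of_le j.isLt hl⟩ - d = p.1 j
      unfold glue
      rw [dif_pos (show ((⟨(j : ℕ), lt_of_lt_of_le j.isLt hl⟩ : Fin r) : ℕ) < l from j.isLt)]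
      show d + p.1 j - d = p.1 j
      omega
    · funext j
      show glue r l d p.1 p.2 ⟨l + (j : ℕ), _⟩ = p.2 j
      unfold glue
      rw [dif_neg (show ¬ ((⟨l + (j : ℕ), by have := j.isLt; omega⟩ : Fin r) : ℕ) < l by
        show ¬ (l + (j : ℕ) < l); omega)]
      have heq : (⟨l + (j : ℕ) - l, by have := j.isLt; omega⟩ : Fin (r - l)) = j :=
        Fin.ext (by show l + (j : ℕ) - l = (j : ℕ); omega)
      exact congrArg p.2 heq
  · intro x hx
    exact (congrArg φ (key x hx)).symm

end ZetaNegAux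

namespace ZetaNegAux

variable (F : Type*) [Field F] [Fintype F]

def Tset (q : ℕ) (m : ℕ → ℕ) (l : ℕ) : Fin l → Finset ℕ :=
  fun j => (Finset.range (m (j : ℕ) + 1)).filter (fun a => (q - 1) ∣ (m (j : ℕ) - a))

theorem prod_glue {v : F[X]} (hd : 0 < v.natDegree) {r l : ℕ}
    (hl : l ≤ r) (m : ℕ → ℕ) (x : Fin l → ℕ) (y : Fin (r - l) → ℕ)
    (hy : ∀ j, y j < v.natDegree) :
    ∏ j : Fin r, powerSumV F v (glue r l v.natDegree x y j) (m (j : ℕ))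
      = (∏ j : Fin l, powerSumV F v (v.natDegree + x j) (m (j : ℕ)))
        * ∏ j : Fin (r - l), powerSum F (y j) (m (l + (j : ℕ))) := by
  have hlr : l + (r - l) = r := by omega
  set d := v.natDegree with hdd
  have h1 : ∏ j : Fin r, powerSumV F v (glue r l d x y j) (m (j : ℕ))
      = ∏ j : Fin (l + (r - l)), powerSumV F v (glue r l d x y (Fin.cast hlr j))
          (m ((Fin.cast hlr j : Fin r) : ℕ)) :=
    (Fintype.prod_equiv (finCongr hlr) _ _ (fun i => rfl)).symm
  rw [h1, Fin.prod_univ_add]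
  congr 1
  · refine Finset.prod_congr rfl fun j _ => ?_
    have hg : glue r l d x y (Fin.cast hlr (Fin.castAdd (r - l) j)) = d + x j := by
      unfold glue
      rw [dif_pos (show ((Fin.cast hlr (Fin.castAdd (r - l) j) : Fin r) : ℕ) < l
        from j.isLt)]
      rfl
    rw [hg]
    rfl
  · refine Finset.prod_congr rfl fun j _ => ?_
    have hg : glue r l d x y (Fin.cast hlr (Fin.natAdd l j)) = y j := by
      unfold glue
      rw [dif_neg (show ¬ ((Fin.cast hlr (Fin.natAdd l j) : Fin r) : ℕ) < l by
        show ¬ (l + (j : ℕ) < l); omega)]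
      exact congrArg y (Fin.ext (show l + (j : ℕ) - l = (j : ℕ) by omega))
    rw [hg, powerSumV_eq_powerSum F hd (hy j)]
    rfl

theorem first_factor {v : F[X]} (hv : v.Monic) (hd : 0 < v.natDegree) (l M : ℕ) (m : ℕ → ℕ)
    (hm : ∀ j : Fin l, m (j : ℕ) ≤ M) :
    ∑ x ∈ SAF l (M + 1), ∏ j : Fin l, powerSumV F v (v.natDegree + x j) (m (j : ℕ))
      = (-1 : F[X]) ^ l *
        ∑ p ∈ Fintype.piFinset (Tset (Fintype.card F) m l),
          v ^ (∑ j : Fin l, p j)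
            * (∏ j : Fin l, zetaLtOne F v.natDegree (m (j : ℕ) - p j)
                * ((m (j : ℕ)).choose (p j) : F[X]))
            * zetaInf F l (extFun l p) := by
  have hexp : ∀ x : Fin l → ℕ, ∀ j : Fin l,
      powerSumV F v (v.natDegree + x j) (m (j : ℕ))
        = - ∑ a ∈ Tset (Fintype.card F) m l j,
            v ^ a * (zetaLtOne F v.natDegree (m (j : ℕ) - a)
              * ((m (j : ℕ)).choose a : F[X])) * powerSum F (x j) a := by
    intro x j
    rw [add_comm, powerSumV_add F hv hd]
    rfl
  calc ∑ x ∈ SAF l (M + 1), ∏ j : Fin l, powerSumV F v (v.natDegree + x j) (m (j : ℕ))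
      = ∑ x ∈ SAF l (M + 1), ((-1 : F[X]) ^ l * ∑ p ∈ Fintype.piFinset (Tset (Fintype.card F) m l),
          ∏ j : Fin l, (v ^ (p j) * (zetaLtOne F v.natDegree (m (j : ℕ) - p j)
            * ((m (j : ℕ)).choose (p j) : F[X])) * powerSum F (x j) (p j))) := by
        refine Finset.sum_congr rfl fun x _ => ?_
        calc ∏ j : Fin l, powerSumV F v (v.natDegree + x j) (m (j : ℕ))
            = ∏ j : Fin l, -(∑ a ∈ Tset (Fintype.card F) m l j,
                v ^ a * (zetaLtOne F v.natDegree (m (j : ℕ) - a)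
                  * ((m (j : ℕ)).choose a : F[X])) * powerSum F (x j) a) :=
              Finset.prod_congr rfl fun j _ => hexp x j
          _ = ∏ j : Fin l, ((-1 : F[X]) * ∑ a ∈ Tset (Fintype.card F) m l j,
                v ^ a * (zetaLtOne F v.natDegree (m (j : ℕ) - a)
                  * ((m (j : ℕ)).choose a : F[X])) * powerSum F (x j) a) :=
              Finset.prod_congr rfl fun j _ => (neg_one_mul _).symm
          _ = (-1 : F[X]) ^ l * ∏ j : Fin l, (∑ a ∈ Tset (Fintype.card F) m l j,
                v ^ a * (zetaLtOne F v.natDegree (m (j : ℕ) - a)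
                  * ((m (j : ℕ)).choose a : F[X])) * powerSum F (x j) a) := by
              rw [Finset.prod_mul_distrib, Finset.prod_const, Finset.card_univ,
                Fintype.card_fin]
          _ = _ := by
              rw [Finset.prod_univ_sum]
    _ = (-1 : F[X]) ^ l * ∑ p ∈ Fintype.piFinset (Tset (Fintype.card F) m l),
          ∑ x ∈ SAF l (M + 1),
          ∏ j : Fin l, (v ^ (p j) * (zetaLtOne F v.natDegree (m (j : ℕ) - p j)
            * ((m (j : ℕ)).choose (p j) : F[X])) * powerSum F (x j) (p j)) := by
        rw [← Finset.mul_sum, Finset.sum_comm]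
    _ = _ := by
        congr 1
        refine Finset.sum_congr rfl fun p hp => ?_
        have hp' : ∀ j : Fin l, p j ≤ m (j : ℕ) := by
          intro j
          have := (Fintype.mem_piFinset.1 hp) j
          rw [Tset, Finset.mem_filter, Finset.mem_range] at this
          omega
        have hzi : zetaInf F l (extFun l p)
            = ∑ x ∈ SAF l (M + 1), ∏ j : Fin l, powerSum F (x j) (p j) := by
          rw [zetaInf_eq_fin F l (extFun l p) (M + 1)
            (fun j => by
              rw [extFun, dif_pos j.isLt]
              exact Nat.lt_succ_of_le ((hp' j).trans (hm j)))]
          refine Finset.sum_congr rfl fun x _ => Finset.prod_congr rfl fun j _ => ?_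
          rw [extFun, dif_pos j.isLt]
        rw [hzi, Finset.mul_sum]
        refine Finset.sum_congr rfl fun x _ => ?_
        rw [Finset.prod_mul_distrib, Finset.prod_mul_distrib,
          Finset.prod_pow_eq_pow_sum]

theorem finsum_a (v : F[X]) (l : ℕ) (m : ℕ → ℕ) :
    (∑ᶠ a ∈ {a : ℕ → ℕ | (∀ j < l, a j ≤ m j ∧ (Fintype.card F - 1) ∣ (m j - a j)) ∧
        ∀ j, l ≤ j → a j = 0},
      v ^ (∑ j ∈ Finset.range l, a j)
        * (∏ j ∈ Finset.range l, zetaLtOne F v.natDegree (m j - a j)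
            * ((m j).choose (a j) : F[X]))
        * zetaInf F l a)
      = ∑ p ∈ Fintype.piFinset (Tset (Fintype.card F) m l),
          v ^ (∑ j : Fin l, p j) * (∏ j : Fin l, zetaLtOne F v.natDegree (m (j : ℕ) - p j)
            * ((m (j : ℕ)).choose (p j) : F[X])) * zetaInf F l (extFun l p) := by
  classical
  have hinj : ∀ p ∈ Fintype.piFinset (Tset (Fintype.card F) m l),
      ∀ p' ∈ Fintype.piFinset (Tset (Fintype.card F) m l),
      extFun l p = extFun l p' → p = p' := by
    intro p _ p' _ h
    funext j
    have := congrFun h (j : ℕ)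
    rw [extFun, extFun, dif_pos j.isLt, dif_pos j.isLt] at this
    exact this
  rw [finsum_mem_eq_finset_sum _ _
      ((Fintype.piFinset (Tset (Fintype.card F) m l)).image (extFun l)) ?h1 ?h2]
  · rw [Finset.sum_image hinj]
    refine Finset.sum_congr rfl fun p hp => ?_
    have h1 : ∑ j ∈ Finset.range l, extFun l p j = ∑ j : Fin l, p j := by
      rw [← Fin.sum_univ_eq_sum_range]
      exact Finset.sum_congr rfl fun j _ => by rw [extFun, dif_pos j.isLt]
    have h2 : ∏ j ∈ Finset.range l, zetaLtOne F v.natDegree (m j - extFun l p j)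
          * ((m j).choose (extFun l p j) : F[X])
        = ∏ j : Fin l, zetaLtOne F v.natDegree (m (j : ℕ) - p j)
          * ((m (j : ℕ)).choose (p j) : F[X]) := by
      rw [← Fin.prod_univ_eq_prod_range]
      exact Finset.prod_congr rfl fun j _ => by rw [extFun, dif_pos j.isLt]
    rw [h1, h2]
  case h1 =>
    intro a ha _
    rw [Set.mem_setOf_eq] at ha
    rw [Finset.mem_image]
    refine ⟨fun j : Fin l => a (j : ℕ), ?_, ?_⟩
    · rw [Fintype.mem_piFinset]
      intro j
      rw [Tset, Finset.mem_filter, Finset.mem_range]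
      obtain ⟨hle, hdvd⟩ := ha.1 (j : ℕ) j.isLt
      exact ⟨by omega, hdvd⟩
    · funext j
      rw [extFun]
      split_ifs with h
      · rfl
      · exact (ha.2 j (by omega)).symm
  case h2 =>
    intro a ha
    rw [Finset.mem_image] at ha
    obtain ⟨p, hp, rfl⟩ := ha
    rw [Set.mem_setOf_eq]
    constructor
    · intro j hj
      have := (Fintype.mem_piFinset.1 hp) ⟨j, hj⟩
      rw [Tset, Finset.mem_filter, Finset.mem_range] at this
      rw [extFun, dif_pos hj]
      have hmm : m ((⟨j, hj⟩ : Fin l) : ℕ) = m j := rfl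
      exact ⟨by omega, this.2⟩
    · intro j hj
      rw [extFun, dif_neg (by omega)]

end ZetaNegAux

/-- Formula for v-adic multiple zeta values at negative integers in terms of ∞-adic ones.
The inner sum runs over tuples `(a_1, …, a_l)` (encoded as functions `a : ℕ → ℕ`
vanishing from index `l` on) with `0 ≤ a_j ≤ m_j` and `(q-1) ∣ (m_j - a_j)`. -/
theorem zetaV_eq_sum_zetaInf (F : Type*) [Field F] [Fintype F] (v : Polynomial F)
    (hv : v.Monic) (hvirr : Irreducible v) (hd : 0 < v.natDegree) (r : ℕ) (hr : 1 ≤ r)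
    (m : ℕ → ℕ) :
    zetaV F v r m =
      ∑ l ∈ Finset.range (r + 1),
        (-1 : Polynomial F) ^ l * zetaLt F v.natDegree (r - l) (fun j => m (l + j)) *
          ∑ᶠ a ∈ {a : ℕ → ℕ |
              (∀ j < l, a j ≤ m j ∧ (Fintype.card F - 1) ∣ (m j - a j)) ∧
                ∀ j, l ≤ j → a j = 0},
            v ^ (∑ j ∈ Finset.range l, a j) *
              (∏ j ∈ Finset.range l,
                zetaLtOne F v.natDegree (m j - a j) * (Nat.choose (m j) (a j) : Polynomial F)) *
              zetaInf F l a := by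
  classical
  set M := ∑ j ∈ Finset.range r, m j with hM
  have hmM : ∀ j : Fin r, m (j : ℕ) ≤ M := fun j =>
    Finset.single_le_sum (f := m) (fun _ _ => Nat.zero_le _) (Finset.mem_range.2 j.isLt)
  have hB : ∀ j : Fin r, m (j : ℕ) + v.natDegree < M + v.natDegree + 1 := fun j => by
    have := hmM j; omega
  rw [ZetaNegAux.zetaV_eq_fin F hv hd r m (M + v.natDegree + 1) hB]
  have hmaps : ∀ x ∈ ZetaNegAux.SAF r (M + v.natDegree + 1),
      (fun x : Fin r → ℕ => (Finset.univ.filter fun j => v.natDegree ≤ x j).card) x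
        ∈ Finset.range (r + 1) := by
    intro x _
    refine Finset.mem_range.2 ?_
    show (Finset.univ.filter fun j : Fin r => v.natDegree ≤ x j).card < r + 1
    have h1 := Finset.card_filter_le Finset.univ (fun j : Fin r => v.natDegree ≤ x j)
    rw [Finset.card_univ, Fintype.card_fin] at h1
    exact Nat.lt_succ_of_le h1
  rw [← Finset.sum_fiberwise_of_maps_to hmaps]
  refine Finset.sum_congr rfl fun l hl => ?_
  have hlr : l ≤ r := by rw [Finset.mem_range] at hl; omega
  rw [ZetaNegAux.sum_fiber_eq v.natDegree M hlr
    (fun x => ∏ j : Fin r, powerSumV F v (x j) (m (j : ℕ)))]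
  rw [Finset.sum_product]
  have hm' : ∀ j : Fin l, m (j : ℕ) ≤ M := fun j =>
    hmM ⟨(j : ℕ), lt_of_lt_of_le j.isLt hlr⟩
  calc ∑ x ∈ ZetaNegAux.SAF l (M + 1), ∑ y ∈ ZetaNegAux.SAF (r - l) v.natDegree,
        ∏ j : Fin r, powerSumV F v (ZetaNegAux.glue r l v.natDegree x y j) (m (j : ℕ))
      = ∑ x ∈ ZetaNegAux.SAF l (M + 1), ∑ y ∈ ZetaNegAux.SAF (r - l) v.natDegree,
          (∏ j : Fin l, powerSumV F v (v.natDegree + x j) (m (j : ℕ)))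
            * ∏ j : Fin (r - l), powerSum F (y j) (m (l + (j : ℕ))) :=
        Finset.sum_congr rfl fun x _ => Finset.sum_congr rfl fun y hy =>
          ZetaNegAux.prod_glue F hd hlr m x y (fun j => (ZetaNegAux.mem_SAF.1 hy).1 j)
    _ = (∑ x ∈ ZetaNegAux.SAF l (M + 1),
          ∏ j : Fin l, powerSumV F v (v.natDegree + x j) (m (j : ℕ)))
        * (∑ y ∈ ZetaNegAux.SAF (r - l) v.natDegree,
          ∏ j : Fin (r - l), powerSum F (y j) (m (l + (j : ℕ)))) := by
        rw [← Finset.sum_mul_sum]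
    _ = _ := by
        have h2 : ∑ y ∈ ZetaNegAux.SAF (r - l) v.natDegree,
            ∏ j : Fin (r - l), powerSum F (y j) (m (l + (j : ℕ)))
              = zetaLt F v.natDegree (r - l) (fun j => m (l + j)) := by
          rw [ZetaNegAux.zetaLt_eq_fin]
        rw [h2, ZetaNegAux.first_factor F hv hd l M m hm', ← ZetaNegAux.finsum_a F v l m]
        ring
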